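/- Let k ≥ 6 and let F be a union-closed family of m subsets of [n] with 2^k + 2 ≤ m ≤ 2^{3(k-1)} and ∅ ∈ F. Then there are at least k elements of [n] each contained in more than m/(2^{k-1}+1) sets of F. Equivalently, f_k(F) > 1/(2^{k-1}+1). -/

import Mathlib

private lemma six_mul_le (j : ℕ) (hj : 5 ≤ j) : 6 * j ≤ 2 ^ j + 1 := by
  induction j, hj using Nat.le_induction with
  | base => norm_num
  | succ n hn ih =>
    have h6 : 6 ≤ 2 ^ n := by
      calc (6 : ℕ) ≤ 2 ^ 3 := by norm_num
        _ ≤ 2 ^ n := Nat.pow_le_pow_right (by norm_num) (by omega)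
    rw [pow_succ]
    omega

/-- Let `k ≥ 6` and let `F` be a union-closed family of `m` subsets of `[n]` with
`2^k + 2 ≤ m ≤ 2^(3(k-1))` and `∅ ∈ F`. Then at least `k` elements of `[n]` are each
contained in more than `m/(2^(k-1)+1)` sets of `F`; i.e. `f_k(F) > 1/(2^(k-1)+1)`. -/
theorem stmt_12 (n k m : ℕ) (hk : 6 ≤ k) (F : Finset (Finset ℕ))
    (hm : m = F.card)
    (hsub : ∀ A ∈ F, A ⊆ Finset.Icc 1 n)
    (hUC : ∀ A ∈ F, ∀ B ∈ F, A ∪ B ∈ F)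
    (hempty : ∅ ∈ F)
    (hlo : 2 ^ k + 2 ≤ m) (hhi : m ≤ 2 ^ (3 * (k - 1))) :
    k ≤ ((Finset.Icc 1 n).filter (fun i =>
      (m : ℚ) / (2 ^ (k - 1) + 1) < ((F.filter (fun A => i ∈ A)).card : ℚ))).card := by
  classical
  by_contra hcon
  push_neg at hcon
  set T : Finset ℕ := (Finset.Icc 1 n).filter (fun i =>
      (m : ℚ) / (2 ^ (k - 1) + 1) < ((F.filter (fun A => i ∈ A)).card : ℚ)) with hTdef
  have hTcard : T.card ≤ k - 1 := by omega
  -- bad sets are subsets of T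
  have hbad : (F.filter (fun A => A ⊆ T)).card ≤ 2 ^ (k - 1) := by
    calc (F.filter (fun A => A ⊆ T)).card ≤ T.powerset.card := by
          apply Finset.card_le_card
          intro A hA
          rw [Finset.mem_powerset]
          exact (Finset.mem_filter.mp hA).2
      _ = 2 ^ T.card := Finset.card_powerset T
      _ ≤ 2 ^ (k - 1) := Nat.pow_le_pow_right (by norm_num) hTcard
  have hsplit : (F.filter (fun A => A ⊆ T)).card
      + (F.filter (fun A => ¬ A ⊆ T)).card = m := by
    rw [hm]
    exact Finset.card_filter_add_card_filter_not (fun A => A ⊆ T)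
  have hgood : m ≤ 2 ^ (k - 1) + (F.filter (fun A => ¬ A ⊆ T)).card := by omega
  -- 2^k = 2 * 2^(k-1)
  have h2k : 2 ^ k = 2 ^ (k - 1) * 2 := by
    rw [← pow_succ]
    congr 1
    omega
  have hgoodpos : 0 < (F.filter (fun A => ¬ A ⊆ T)).card := by omega
  -- the ambient transversal
  set V : Finset ℕ := (Finset.Icc 1 n) \ T with hVdef
  have hVtrans : ∀ A ∈ F, ¬ A ⊆ T → (A ∩ V).Nonempty := by
    intro A hA hAT
    obtain ⟨i, hiA, hiT⟩ := Finset.not_subset.mp hAT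
    exact ⟨i, Finset.mem_inter.mpr ⟨hiA,
      Finset.mem_sdiff.mpr ⟨hsub A hA hiA, hiT⟩⟩⟩
  set 𝒯 : Finset (Finset ℕ) :=
    V.powerset.filter (fun S => ∀ A ∈ F, ¬ A ⊆ T → (A ∩ S).Nonempty) with h𝒯def
  have hV𝒯 : V ∈ 𝒯 := by
    rw [h𝒯def, Finset.mem_filter]
    exact ⟨Finset.mem_powerset.mpr (le_refl V), hVtrans⟩
  obtain ⟨S, hS𝒯, hSmin⟩ := Finset.exists_min_image 𝒯 Finset.card ⟨V, hV𝒯⟩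
  have hSV : S ⊆ V := Finset.mem_powerset.mp (Finset.mem_filter.mp hS𝒯).1
  have hStr : ∀ A ∈ F, ¬ A ⊆ T → (A ∩ S).Nonempty := (Finset.mem_filter.mp hS𝒯).2
  -- private sets
  have hpriv : ∀ x ∈ S, ∃ A, A ∈ F ∧ ¬ A ⊆ T ∧ A ∩ S = {x} := by
    intro x hx
    have hne : ¬ (∀ A ∈ F, ¬ A ⊆ T → (A ∩ S.erase x).Nonempty) := by
      intro hall
      have hmem : S.erase x ∈ 𝒯 := by
        rw [h𝒯def, Finset.mem_filter]
        exact ⟨Finset.mem_powerset.mpr ((Finset.erase_subset x S).trans hSV), hall⟩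
      have h1 := hSmin _ hmem
      have h2 : (S.erase x).card < S.card := Finset.card_erase_lt_of_mem hx
      omega
    push_neg at hne
    obtain ⟨A, hAF, hAT, hAe⟩ := hne
    refine ⟨A, hAF, hAT, ?_⟩
    have hsub1 : A ∩ S ⊆ {x} := by
      intro i hi
      rw [Finset.mem_singleton]
      by_contra hix
      obtain ⟨hiA, hiS⟩ := Finset.mem_inter.mp hi
      exact Finset.Nonempty.ne_empty ⟨i, Finset.mem_inter.mpr ⟨hiA, Finset.mem_erase.mpr ⟨hix, hiS⟩⟩⟩ hAe
    rcases Finset.subset_singleton_iff.mp hsub1 with h | h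
    · exact absurd h (Finset.Nonempty.ne_empty (hStr A hAF hAT))
    · exact h
  -- choice function
  set a : ℕ → Finset ℕ := fun x =>
    if h : ∃ A, A ∈ F ∧ ¬ A ⊆ T ∧ A ∩ S = {x} then h.choose else ∅ with hadef
  have ha : ∀ x ∈ S, a x ∈ F ∧ a x ∩ S = {x} := by
    intro x hx
    have h := hpriv x hx
    rw [hadef]
    simp only [dif_pos h]
    exact ⟨h.choose_spec.1, h.choose_spec.2.2⟩
  -- sup of private sets
  have hsup : ∀ X : Finset ℕ, X ⊆ S → X.sup a ∈ F ∧ (X.sup a) ∩ S = X := by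
    intro X
    induction X using Finset.induction_on with
    | empty => intro _; simpa using hempty
    | @insert x X hx ih =>
      intro hins
      have hxS : x ∈ S := hins (Finset.mem_insert_self _ _)
      have hXS : X ⊆ S := (Finset.subset_insert x X).trans hins
      obtain ⟨haF, haS⟩ := ha x hxS
      obtain ⟨ihF, ihS⟩ := ih hXS
      rw [Finset.sup_insert]
      constructor
      · rw [Finset.sup_eq_union]
        exact hUC _ haF _ ihF
      · rw [Finset.sup_eq_union, Finset.union_inter_distrib_right, haS, ihS,
          Finset.insert_eq]
  -- injection of the powerset into F
  have hpow : 2 ^ S.card ≤ m := by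
    rw [hm, ← Finset.card_powerset]
    apply Finset.card_le_card_of_injOn (fun X => X.sup a)
    · intro X hX
      exact (hsup X (Finset.mem_powerset.mp hX)).1
    · intro X hX Y hY hXY
      have h1 := (hsup X (Finset.mem_powerset.mp hX)).2
      have h2 := (hsup Y (Finset.mem_powerset.mp hY)).2
      rw [← h1, ← h2]
      simp only at hXY
      rw [hXY]
  have hScard : S.card ≤ 3 * (k - 1) := by
    have h1 : 2 ^ S.card ≤ 2 ^ (3 * (k - 1)) := hpow.trans hhi
    exact (Nat.pow_le_pow_iff_right (by norm_num)).mp h1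
  -- counting: good sets ≤ sum of frequencies over S
  have hcount : (F.filter (fun A => ¬ A ⊆ T)).card
      ≤ ∑ x ∈ S, (F.filter (fun A => x ∈ A)).card := by
    have step1 : (F.filter (fun A => ¬ A ⊆ T)).card
        ≤ ∑ A ∈ F.filter (fun A => ¬ A ⊆ T), (A ∩ S).card := by
      rw [Finset.card_eq_sum_ones]
      apply Finset.sum_le_sum
      intro A hA
      obtain ⟨hAF, hAT⟩ := Finset.mem_filter.mp hA
      exact Finset.card_pos.mpr (hStr A hAF hAT)
    have step2 : ∑ A ∈ F.filter (fun A => ¬ A ⊆ T), (A ∩ S).card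
        ≤ ∑ A ∈ F, (A ∩ S).card :=
      Finset.sum_le_sum_of_subset (Finset.filter_subset _ _)
    have step3 : ∑ A ∈ F, (A ∩ S).card
        = ∑ x ∈ S, (F.filter (fun A => x ∈ A)).card := by
      have hinter : ∀ A : Finset ℕ, (A ∩ S).card
          = ∑ x ∈ S, (if x ∈ A then 1 else 0) := by
        intro A
        have : A ∩ S = S.filter (fun x => x ∈ A) := by
          ext i
          simp [Finset.mem_inter, Finset.mem_filter, and_comm]
        rw [this, Finset.card_filter]
      calc ∑ A ∈ F, (A ∩ S).card
          = ∑ A ∈ F, ∑ x ∈ S, (if x ∈ A then 1 else 0) := by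
            exact Finset.sum_congr rfl (fun A _ => hinter A)
        _ = ∑ x ∈ S, ∑ A ∈ F, (if x ∈ A then 1 else 0) := Finset.sum_comm
        _ = ∑ x ∈ S, (F.filter (fun A => x ∈ A)).card := by
            exact Finset.sum_congr rfl (fun x _ => (Finset.card_filter _ _).symm)
    omega
  -- S is nonempty
  have hSne : S.Nonempty := by
    obtain ⟨A, hA⟩ := Finset.card_pos.mp hgoodpos
    obtain ⟨hAF, hAT⟩ := Finset.mem_filter.mp hA
    obtain ⟨x, hx⟩ := hStr A hAF hAT
    exact ⟨x, (Finset.mem_inter.mp hx).2⟩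
  -- pigeonhole
  have hpig : ∃ x ∈ S, (F.filter (fun A => ¬ A ⊆ T)).card
      ≤ S.card * (F.filter (fun A => x ∈ A)).card := by
    apply Finset.exists_le_of_sum_le hSne
    calc ∑ _x ∈ S, (F.filter (fun A => ¬ A ⊆ T)).card
        = S.card * (F.filter (fun A => ¬ A ⊆ T)).card := by
          rw [Finset.sum_const, smul_eq_mul]
      _ ≤ S.card * ∑ x ∈ S, (F.filter (fun A => x ∈ A)).card :=
          Nat.mul_le_mul_left _ hcount
      _ = ∑ x ∈ S, S.card * (F.filter (fun A => x ∈ A)).card := Finset.mul_sum _ _ _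
  obtain ⟨x, hxS, hxge⟩ := hpig
  set q : ℕ := (F.filter (fun A => x ∈ A)).card with hqdef
  -- final numeric contradiction: m < q * (2^(k-1)+1)
  have hfin : m < q * (2 ^ (k - 1) + 1) := by
    have h1 : S.card * q ≤ 3 * (k - 1) * q := Nat.mul_le_mul_right q hScard
    have h6 : 6 * (k - 1) ≤ 2 ^ (k - 1) + 1 := six_mul_le (k - 1) (by omega)
    have h2 : 6 * (k - 1) * q ≤ (2 ^ (k - 1) + 1) * q := Nat.mul_le_mul_right q h6
    have h3 : (2 ^ (k - 1) + 1) * q = q * (2 ^ (k - 1) + 1) := Nat.mul_comm _ _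
    -- m ≤ 2^(k-1) + good ≤ 2^(k-1) + S.card * q ≤ 2^(k-1) + 3(k-1)q
    -- 2*2^(k-1) + 2 ≤ m  ⇒  m + 2 ≤ 6(k-1)q ≤ (2^(k-1)+1)q
    have h4 : m ≤ 2 ^ (k - 1) + 3 * (k - 1) * q := by omega
    have h5 : 2 * (2 ^ (k - 1)) + 2 ≤ m := by omega
    have h7 : 2 * m ≤ 2 * 2 ^ (k - 1) + 6 * (k - 1) * q := by
      have : 2 * (3 * (k - 1) * q) = 6 * (k - 1) * q := by ring
      omega
    omega
  -- hence x ∈ T, contradiction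
  have hxV : x ∈ V := hSV hxS
  obtain ⟨hxIcc, hxT⟩ := Finset.mem_sdiff.mp hxV
  apply hxT
  rw [hTdef, Finset.mem_filter]
  refine ⟨hxIcc, ?_⟩
  have hden : (0 : ℚ) < 2 ^ (k - 1) + 1 := by positivity
  rw [div_lt_iff₀ hden]
  have : (m : ℚ) < (q : ℚ) * ((2 : ℚ) ^ (k - 1) + 1) := by
    exact_mod_cast hfin
  exact this
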